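/- Let n ≥ 3 and μ ∈ ℝⁿ with μ ≠ 0. Then for β, γ ∈ ℝ^{n-1}, d^μ_β = d^μ_γ (as functions on S_n × S_n) if and only if β = γ. -/
import Mathlib


open Finset

noncomputable section

/-- `i >_σ j`: candidate `i` is ranked above candidate `j` by `σ`
(where `σ i` is the candidate in position `i`). -/
def prefOver {n : ℕ} (σ : Equiv.Perm (Fin n)) (i j : Fin n) : Prop :=
  σ.symm i < σ.symm j

/-- `M(S,σ)`: the set of `>_σ`-maximal elements of `S` (a singleton when `S ≠ ∅`). -/
def bestSet {n : ℕ} (σ : Equiv.Perm (Fin n)) (S : Finset (Fin n)) : Finset (Fin n) :=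
  S.filter fun x => ∀ y ∈ S, σ.symm x ≤ σ.symm y

/-- `△_S(σ,π) = M(S,σ) △ M(S,π)`. -/
def topDiff {n : ℕ} (σ π : Equiv.Perm (Fin n)) (S : Finset (Fin n)) : Finset (Fin n) :=
  symmDiff (bestSet σ S) (bestSet π S)

/-- The `(β,μ)`-top-difference distance; `β i` is the weight of menus of size `i+2`. -/
def dTD (n : ℕ) (β : Fin (n - 1) → ℝ) (μ : Fin n → ℝ)
    (σ π : Equiv.Perm (Fin n)) : ℝ :=
  ∑ S ∈ Finset.univ.filter (fun S : Finset (Fin n) => 2 ≤ S.card),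
    (if h : S.card - 2 < n - 1 then β ⟨S.card - 2, h⟩ else 0) *
      ∑ x ∈ topDiff σ π S, μ x

def IsSemimetric {α : Type*} (d : α → α → ℝ) : Prop :=
  (∀ x y, 0 ≤ d x y) ∧ (∀ x y, d x y = d y x) ∧ (∀ x, d x x = 0) ∧
    (∀ x y z, d x z ≤ d x y + d y z)

def IsMetricFn {α : Type*} (d : α → α → ℝ) : Prop :=
  IsSemimetric d ∧ ∀ x y, d x y = 0 → x = y

/-! ### Auxiliary lemmas -/

lemma exists_pair_aux {n : ℕ} (hn : 3 ≤ n) (μ : Fin n → ℝ) (hμ : μ ≠ 0) :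
    ∃ a b : Fin n, a ≠ b ∧ μ a + μ b ≠ 0 := by
  obtain ⟨x, hx⟩ : ∃ x, μ x ≠ 0 := by
    by_contra h; push_neg at h; exact hμ (funext h)
  by_cases h : ∃ y, y ≠ x ∧ μ x + μ y ≠ 0
  · obtain ⟨y, hyx, hy⟩ := h
    exact ⟨x, y, fun e => hyx e.symm, hy⟩
  · push_neg at h
    have h2 : 1 < (Finset.univ.erase x).card := by
      rw [Finset.card_erase_of_mem (Finset.mem_univ x), Finset.card_univ, Fintype.card_fin]
      omega
    obtain ⟨y, hy, z, hz, hyz⟩ := Finset.one_lt_card.mp h2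
    refine ⟨y, z, hyz, ?_⟩
    have hy' := h y (Finset.ne_of_mem_erase hy)
    have hz' := h z (Finset.ne_of_mem_erase hz)
    intro e
    apply hx
    linarith

lemma exists_perm_aux {n : ℕ} (a b pa pb : Fin n) (hab : a ≠ b) (hp : pa ≠ pb) :
    ∃ σ : Equiv.Perm (Fin n), σ pa = a ∧ σ pb = b := by
  refine ⟨(Equiv.swap pb ((Equiv.swap pa a).symm b)).trans (Equiv.swap pa a), ?_, ?_⟩
  · have hb' : Equiv.swap pa a b ≠ pa := by
      intro h
      have h2 := congrArg (Equiv.swap pa a) h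
      rw [Equiv.swap_apply_self, Equiv.swap_apply_left] at h2
      exact hab h2.symm
    simp [Equiv.trans_apply, Equiv.swap_apply_of_ne_of_ne hp (Ne.symm hb'),
      Equiv.swap_apply_left]
  · simp [Equiv.trans_apply, Equiv.swap_apply_left, Equiv.apply_symm_apply]

lemma bestSet_eq_singleton {n : ℕ} (σ : Equiv.Perm (Fin n)) {S : Finset (Fin n)} {x : Fin n}
    (hx : x ∈ S) (hmin : ∀ y ∈ S, σ.symm x ≤ σ.symm y) : bestSet σ S = {x} := by
  ext z
  simp only [bestSet, Finset.mem_filter, Finset.mem_singleton]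
  constructor
  · rintro ⟨hz, hz2⟩
    exact σ.symm.injective (le_antisymm (hz2 x hx) (hmin z hz))
  · rintro rfl
    exact ⟨hx, hmin⟩

lemma symm_trans_swap {n : ℕ} (σ : Equiv.Perm (Fin n)) (a b : Fin n) (y : Fin n) :
    (σ.trans (Equiv.swap a b)).symm y = σ.symm (Equiv.swap a b y) := by
  simp [Equiv.symm_trans_apply]

lemma topDiff_swap_pos {n : ℕ} (σ : Equiv.Perm (Fin n)) {a b pa pb : Fin n} (hab : a ≠ b)
    (hpa : σ.symm a = pa) (hpb : σ.symm b = pb) (hstep : (pb : ℕ) = (pa : ℕ) + 1)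
    {S : Finset (Fin n)} (haS : a ∈ S) (hbS : b ∈ S)
    (hmin : ∀ y ∈ S, y ≠ a → y ≠ b → pb < σ.symm y) :
    topDiff σ (σ.trans (Equiv.swap a b)) S = {a, b} := by
  have h1 : bestSet σ S = {a} := by
    refine bestSet_eq_singleton σ haS ?_
    intro y hy
    rcases eq_or_ne y a with rfl | hya
    · exact le_refl _
    rcases eq_or_ne y b with rfl | hyb
    · rw [hpa, hpb, Fin.le_def]; omega
    · have h := hmin y hy hya hyb
      rw [Fin.lt_def] at h
      rw [hpa, Fin.le_def]
      omega
  have h2 : bestSet (σ.trans (Equiv.swap a b)) S = {b} := by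
    refine bestSet_eq_singleton _ hbS ?_
    intro y hy
    rw [symm_trans_swap, symm_trans_swap, Equiv.swap_apply_right, hpa]
    rcases eq_or_ne y a with rfl | hya
    · rw [Equiv.swap_apply_left, hpb, Fin.le_def]; omega
    rcases eq_or_ne y b with rfl | hyb
    · rw [Equiv.swap_apply_right, hpa]
    · rw [Equiv.swap_apply_of_ne_of_ne hya hyb]
      have h := hmin y hy hya hyb
      rw [Fin.lt_def] at h
      rw [Fin.le_def]
      omega
  unfold topDiff
  rw [h1, h2]
  ext z
  simp only [Finset.mem_symmDiff, Finset.mem_singleton, Finset.mem_insert]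
  constructor
  · rintro (⟨rfl, -⟩ | ⟨rfl, -⟩)
    · exact Or.inl rfl
    · exact Or.inr rfl
  · rintro (rfl | rfl)
    · exact Or.inl ⟨rfl, hab⟩
    · exact Or.inr ⟨rfl, fun h => hab h.symm⟩

lemma topDiff_swap_neg {n : ℕ} (σ : Equiv.Perm (Fin n)) {a b pa pb : Fin n} (hab : a ≠ b)
    (hpa : σ.symm a = pa) (hpb : σ.symm b = pb) (hstep : (pb : ℕ) = (pa : ℕ) + 1)
    {S : Finset (Fin n)}
    (hP : ¬(a ∈ S ∧ b ∈ S ∧ ∀ y ∈ S, y ≠ a → y ≠ b → pb < σ.symm y)) :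
    topDiff σ (σ.trans (Equiv.swap a b)) S = ∅ := by
  rcases S.eq_empty_or_nonempty with rfl | hS
  · simp [topDiff, bestSet]
  obtain ⟨x, hx, hmin⟩ := S.exists_min_image (fun y => σ.symm y) hS
  suffices hmin' : ∀ y ∈ S, (σ.trans (Equiv.swap a b)).symm x ≤ (σ.trans (Equiv.swap a b)).symm y by
    unfold topDiff
    rw [bestSet_eq_singleton σ hx hmin, bestSet_eq_singleton _ hx hmin', symmDiff_self]
    rfl
  intro y hy
  rw [symm_trans_swap, symm_trans_swap]
  by_cases haS : a ∈ S
  · by_cases hbS : b ∈ S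
    · push_neg at hP
      obtain ⟨y0, hy0S, hy0a, hy0b, hy0le⟩ := hP haS hbS
      have e1 : (σ.symm y0 : ℕ) ≠ (pa : ℕ) := by
        intro h
        exact hy0a (σ.symm.injective ((Fin.val_injective h).trans hpa.symm))
      have e2 : (σ.symm y0 : ℕ) ≠ (pb : ℕ) := by
        intro h
        exact hy0b (σ.symm.injective ((Fin.val_injective h).trans hpb.symm))
      rw [Fin.le_def] at hy0le
      have hxy0 := hmin y0 hy0S
      rw [Fin.le_def] at hxy0
      have hxa : x ≠ a := by
        intro h
        rw [h, hpa] at hxy0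
        omega
      have hxb : x ≠ b := by
        intro h
        rw [h, hpb] at hxy0
        omega
      rw [Equiv.swap_apply_of_ne_of_ne hxa hxb]
      rcases eq_or_ne y a with hya | hya
      · rw [hya, Equiv.swap_apply_left, hpb, Fin.le_def]; omega
      rcases eq_or_ne y b with hyb | hyb
      · rw [hyb, Equiv.swap_apply_right, hpa, Fin.le_def]; omega
      · rw [Equiv.swap_apply_of_ne_of_ne hya hyb]
        exact hmin y hy
    · have hyb : y ≠ b := fun h => hbS (h ▸ hy)
      have hxb : x ≠ b := fun h => hbS (h ▸ hx)
      rcases eq_or_ne x a with hxa | hxa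
      · rw [hxa, Equiv.swap_apply_left]
        rcases eq_or_ne y a with hya | hya
        · rw [hya, Equiv.swap_apply_left]
        · rw [Equiv.swap_apply_of_ne_of_ne hya hyb, hpb, Fin.le_def]
          have h1 := hmin y hy
          rw [hxa, hpa, Fin.le_def] at h1
          have h2 : (σ.symm y : ℕ) ≠ (pa : ℕ) := by
            intro h
            exact hya (σ.symm.injective ((Fin.val_injective h).trans hpa.symm))
          omega
      · rw [Equiv.swap_apply_of_ne_of_ne hxa hxb]
        rcases eq_or_ne y a with hya | hya
        · rw [hya, Equiv.swap_apply_left, hpb, Fin.le_def]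
          have h1 := hmin a haS
          rw [hpa, Fin.le_def] at h1
          omega
        · rw [Equiv.swap_apply_of_ne_of_ne hya hyb]
          exact hmin y hy
  · have hya : y ≠ a := fun h => haS (h ▸ hy)
    have hxa : x ≠ a := fun h => haS (h ▸ hx)
    rcases eq_or_ne x b with hxb | hxb
    · rw [hxb, Equiv.swap_apply_right]
      rcases eq_or_ne y b with hyb | hyb
      · rw [hyb, Equiv.swap_apply_right]
      · rw [Equiv.swap_apply_of_ne_of_ne hya hyb, hpa, Fin.le_def]
        have h1 := hmin y hy
        rw [hxb, hpb, Fin.le_def] at h1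
        omega
    · rw [Equiv.swap_apply_of_ne_of_ne hxa hxb]
      rcases eq_or_ne y b with hyb | hyb
      · rw [hyb, Equiv.swap_apply_right, hpa, Fin.le_def]
        have h1 := hmin b (hyb ▸ hy)
        rw [hpb, Fin.le_def] at h1
        have h2 : (σ.symm x : ℕ) ≠ (pb : ℕ) := by
          intro h
          exact hxb (σ.symm.injective ((Fin.val_injective h).trans hpb.symm))
        omega
      · rw [Equiv.swap_apply_of_ne_of_ne hya hyb]
        exact hmin y hy

lemma dTD_swap {n : ℕ} (β : Fin (n - 1) → ℝ) (μ : Fin n → ℝ)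
    (σ : Equiv.Perm (Fin n)) {a b pa pb : Fin n} (hab : a ≠ b)
    (hpa : σ.symm a = pa) (hpb : σ.symm b = pb) (hstep : (pb : ℕ) = (pa : ℕ) + 1) :
    dTD n β μ σ (σ.trans (Equiv.swap a b)) =
      ∑ T ∈ (Finset.univ.filter fun y : Fin n => pb < σ.symm y).powerset,
        (if h : T.card < n - 1 then β ⟨T.card, h⟩ else 0) * (μ a + μ b) := by
  classical
  have haR : a ∉ Finset.univ.filter fun y : Fin n => pb < σ.symm y := by
    simp only [Finset.mem_filter, Finset.mem_univ, true_and, hpa, Fin.lt_def, not_lt]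
    omega
  have hbR : b ∉ Finset.univ.filter fun y : Fin n => pb < σ.symm y := by
    simp only [Finset.mem_filter, Finset.mem_univ, true_and, hpb, Fin.lt_def, not_lt]
    omega
  have key : ∀ S ∈ Finset.univ.filter (fun S : Finset (Fin n) => 2 ≤ S.card),
      (if h : S.card - 2 < n - 1 then β ⟨S.card - 2, h⟩ else 0) *
          ∑ x ∈ topDiff σ (σ.trans (Equiv.swap a b)) S, μ x
        = if a ∈ S ∧ b ∈ S ∧ ∀ y ∈ S, y ≠ a → y ≠ b → pb < σ.symm y
          then (if h : S.card - 2 < n - 1 then β ⟨S.card - 2, h⟩ else 0) * (μ a + μ b)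
          else 0 := by
    intro S _
    by_cases hPS : a ∈ S ∧ b ∈ S ∧ ∀ y ∈ S, y ≠ a → y ≠ b → pb < σ.symm y
    · rw [if_pos hPS, topDiff_swap_pos σ hab hpa hpb hstep hPS.1 hPS.2.1 hPS.2.2,
        Finset.sum_pair hab]
    · rw [if_neg hPS, topDiff_swap_neg σ hab hpa hpb hstep hPS]
      simp
  have himg : (Finset.univ.filter (fun S : Finset (Fin n) => 2 ≤ S.card)).filter
      (fun S => a ∈ S ∧ b ∈ S ∧ ∀ y ∈ S, y ≠ a → y ≠ b → pb < σ.symm y) =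
      (Finset.univ.filter fun y : Fin n => pb < σ.symm y).powerset.image
        (fun T => insert a (insert b T)) := by
    ext S
    simp only [Finset.mem_filter, Finset.mem_univ, true_and, Finset.mem_image,
      Finset.mem_powerset]
    constructor
    · rintro ⟨hc, haS, hbS, hmin⟩
      refine ⟨(S.erase a).erase b, ?_, ?_⟩
      · intro y hy
        simp only [Finset.mem_erase] at hy
        obtain ⟨hyb, hya, hyS⟩ := hy
        simp only [Finset.mem_filter, Finset.mem_univ, true_and]
        exact hmin y hyS hya hyb
      · ext z
        simp only [Finset.mem_insert, Finset.mem_erase]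
        constructor
        · rintro (rfl | rfl | ⟨-, -, h⟩)
          · exact haS
          · exact hbS
          · exact h
        · intro hz
          by_cases h1 : z = a
          · exact Or.inl h1
          by_cases h2 : z = b
          · exact Or.inr (Or.inl h2)
          · exact Or.inr (Or.inr ⟨h2, h1, hz⟩)
    · rintro ⟨T, hT, rfl⟩
      have haT : a ∉ T := fun h => haR (hT h)
      have hbT : b ∉ T := fun h => hbR (hT h)
      have hcard : (insert a (insert b T)).card = T.card + 2 := by
        rw [Finset.card_insert_of_notMem (by simp [hab, haT]),
          Finset.card_insert_of_notMem hbT]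
      refine ⟨by omega, Finset.mem_insert_self _ _,
        Finset.mem_insert_of_mem (Finset.mem_insert_self _ _), ?_⟩
      intro y hy hya hyb
      have hyT : y ∈ T := by
        rcases Finset.mem_insert.mp hy with rfl | hy2
        · exact absurd rfl hya
        rcases Finset.mem_insert.mp hy2 with rfl | hy3
        · exact absurd rfl hyb
        · exact hy3
      have := hT hyT
      simp only [Finset.mem_filter, Finset.mem_univ, true_and] at this
      exact this
  have herase : ∀ T : Finset (Fin n),
      T ⊆ (Finset.univ.filter fun y : Fin n => pb < σ.symm y) →
      ((insert a (insert b T)).erase a).erase b = T := by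
    intro T hT
    have haT : a ∉ T := fun h => haR (hT h)
    have hbT : b ∉ T := fun h => hbR (hT h)
    rw [Finset.erase_insert (by simp [hab, haT]), Finset.erase_insert hbT]
  have hinj : ∀ T1 ∈ (Finset.univ.filter fun y : Fin n => pb < σ.symm y).powerset,
      ∀ T2 ∈ (Finset.univ.filter fun y : Fin n => pb < σ.symm y).powerset,
      insert a (insert b T1) = insert a (insert b T2) → T1 = T2 := by
    intro T1 h1 T2 h2 h
    rw [Finset.mem_powerset] at h1 h2
    rw [← herase T1 h1, ← herase T2 h2, h]
  rw [dTD, Finset.sum_congr rfl key, ← Finset.sum_filter, himg, Finset.sum_image hinj]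
  refine Finset.sum_congr rfl fun T hT => ?_
  rw [Finset.mem_powerset] at hT
  have haT : a ∉ T := fun h => haR (hT h)
  have hbT : b ∉ T := fun h => hbR (hT h)
  have hcard : (insert a (insert b T)).card = T.card + 2 := by
    rw [Finset.card_insert_of_notMem (by simp [hab, haT]),
      Finset.card_insert_of_notMem hbT]
  simp [hcard]

theorem stmt1 (n : ℕ) (hn : 3 ≤ n) (μ : Fin n → ℝ) (hμ : μ ≠ 0)
    (β γ : Fin (n - 1) → ℝ) :
    dTD n β μ = dTD n γ μ ↔ β = γ := by
  constructor
  · intro hd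
    obtain ⟨a, b, hab, hsum⟩ := exists_pair_aux hn μ hμ
    suffices H : ∀ k, ∀ hk : k < n - 1, β ⟨k, hk⟩ = γ ⟨k, hk⟩ by
      funext i
      have := H i.1 i.2
      simpa using this
    intro k
    induction k using Nat.strong_induction_on with
    | _ k IH =>
    intro hk
    have hn2 : n - 2 - k < n := by omega
    have hn1 : n - 1 - k < n := by omega
    obtain ⟨σ, hσa, hσb⟩ := exists_perm_aux a b ⟨n - 2 - k, hn2⟩ ⟨n - 1 - k, hn1⟩ hab
      (by simp only [ne_eq, Fin.mk.injEq]; omega)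
    have hpa : σ.symm a = ⟨n - 2 - k, hn2⟩ := by rw [← hσa, Equiv.symm_apply_apply]
    have hpb : σ.symm b = ⟨n - 1 - k, hn1⟩ := by rw [← hσb, Equiv.symm_apply_apply]
    have hstep : (((⟨n - 1 - k, hn1⟩ : Fin n)) : ℕ) = ((⟨n - 2 - k, hn2⟩ : Fin n) : ℕ) + 1 := by
      show n - 1 - k = n - 2 - k + 1
      omega
    have hE := congrFun (congrFun hd σ) (σ.trans (Equiv.swap a b))
    rw [dTD_swap β μ σ hab hpa hpb hstep, dTD_swap γ μ σ hab hpa hpb hstep] at hE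
    have hRimg : (Finset.univ.filter fun y : Fin n => (⟨n - 1 - k, hn1⟩ : Fin n) < σ.symm y)
        = (Finset.Ioi (⟨n - 1 - k, hn1⟩ : Fin n)).image σ := by
      ext y
      simp only [Finset.mem_filter, Finset.mem_univ, true_and, Finset.mem_image,
        Finset.mem_Ioi]
      constructor
      · intro h
        exact ⟨σ.symm y, h, σ.apply_symm_apply y⟩
      · rintro ⟨q, hq, rfl⟩
        rwa [Equiv.symm_apply_apply]
    have hRcard : (Finset.univ.filter fun y : Fin n => (⟨n - 1 - k, hn1⟩ : Fin n) < σ.symm y).card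
        = k := by
      rw [hRimg, Finset.card_image_of_injective _ σ.injective, Fin.card_Ioi]
      show n - 1 - (n - 1 - k) = k
      omega
    have hmem := Finset.mem_powerset_self
      (Finset.univ.filter fun y : Fin n => (⟨n - 1 - k, hn1⟩ : Fin n) < σ.symm y)
    rw [← Finset.add_sum_erase _ _ hmem, ← Finset.add_sum_erase _ _ hmem] at hE
    have htail : ∑ T ∈ (Finset.univ.filter fun y : Fin n =>
          (⟨n - 1 - k, hn1⟩ : Fin n) < σ.symm y).powerset.erase
          (Finset.univ.filter fun y : Fin n => (⟨n - 1 - k, hn1⟩ : Fin n) < σ.symm y),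
          (if h : T.card < n - 1 then β ⟨T.card, h⟩ else 0) * (μ a + μ b)
        = ∑ T ∈ (Finset.univ.filter fun y : Fin n =>
          (⟨n - 1 - k, hn1⟩ : Fin n) < σ.symm y).powerset.erase
          (Finset.univ.filter fun y : Fin n => (⟨n - 1 - k, hn1⟩ : Fin n) < σ.symm y),
          (if h : T.card < n - 1 then γ ⟨T.card, h⟩ else 0) * (μ a + μ b) := by
      refine Finset.sum_congr rfl fun T hT => ?_
      have hT1 := Finset.mem_of_mem_erase hT
      have hT2 := Finset.ne_of_mem_erase hT
      rw [Finset.mem_powerset] at hT1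
      have hlt : T.card < k := by
        rw [← hRcard]
        exact Finset.card_lt_card (Finset.ssubset_iff_subset_ne.mpr ⟨hT1, hT2⟩)
      have hlt1 : T.card < n - 1 := by omega
      rw [dif_pos hlt1, dif_pos hlt1, IH T.card hlt hlt1]
    have hfR : ∀ δ : Fin (n - 1) → ℝ,
        (if h : (Finset.univ.filter fun y : Fin n =>
            (⟨n - 1 - k, hn1⟩ : Fin n) < σ.symm y).card < n - 1
          then δ ⟨(Finset.univ.filter fun y : Fin n =>
            (⟨n - 1 - k, hn1⟩ : Fin n) < σ.symm y).card, h⟩ else 0) = δ ⟨k, hk⟩ := by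
      intro δ
      have h1 : (Finset.univ.filter fun y : Fin n =>
          (⟨n - 1 - k, hn1⟩ : Fin n) < σ.symm y).card < n - 1 := by omega
      rw [dif_pos h1]
      congr 1
      exact Fin.ext hRcard
    rw [hfR β, hfR γ, htail] at hE
    have := add_right_cancel hE
    exact mul_right_cancel₀ hsum this
  · rintro rfl
    rfl

end
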